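/- Let L*(x, y) = −((x+1)²/x)·y²(1 + xy) − y/x² + C(x)·y(1 + xy) for an arbitrary differentiable C : ℝ → ℝ and x ≠ 0. Then L* solves the linear first-order PDE (1 + xy)² · ∂_y( L*/(y(1 + xy)) ) + (1 + (x+1)y)(2 + x + xy(x+1)) = 0 (for y with y(1 + xy) ≠ 0). -/

import Mathlib

/-- The correction term `L*(x,y) = −((x+1)²/x)y²(1+xy) − y/x² + C(x)y(1+xy)` solves the
linear first-order PDE `(1+xy)² ∂_y(L*/(y(1+xy))) + (1+(x+1)y)(2+x+xy(x+1)) = 0`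
for any differentiable `C : ℝ → ℝ`, wherever `x ≠ 0` and `y(1+xy) ≠ 0`. -/
theorem correction_term_solves_pde
    (C : ℝ → ℝ) (hC : Differentiable ℝ C)
    (x : ℝ) (hx : x ≠ 0) (y : ℝ) (hy : y * (1 + x * y) ≠ 0) :
    ∃ d : ℝ,
      HasDerivAt
        (fun t : ℝ =>
          (-( (x + 1) ^ 2 / x) * t ^ 2 * (1 + x * t) - t / x ^ 2
              + C x * t * (1 + x * t))
            / (t * (1 + x * t))) d y ∧
      (1 + x * y) ^ 2 * d + (1 + (x + 1) * y) * (2 + x + x * y * (x + 1)) = 0 := by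
  have hy1 : y ≠ 0 := fun h => hy (by simp [h])
  have hy2 : 1 + x * y ≠ 0 := fun h => hy (by simp [h])
  refine ⟨-(x + 1) ^ 2 / x + 1 / (x * (1 + x * y) ^ 2), ?_, ?_⟩
  · -- derivative of the simplified function g
    have h1 : HasDerivAt (fun t : ℝ => -((x + 1) ^ 2 / x) * t) (-((x + 1) ^ 2 / x)) y := by
      simpa using (hasDerivAt_id y).const_mul (-((x + 1) ^ 2 / x))
    have h2 : HasDerivAt (fun t : ℝ => x ^ 2 * (1 + x * t)) (x ^ 2 * x) y := by
      simpa using (((hasDerivAt_id y).const_mul x).const_add 1).const_mul (x ^ 2)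
    have h2ne : x ^ 2 * (1 + x * y) ≠ 0 := by
      exact mul_ne_zero (pow_ne_zero 2 hx) hy2
    have h3 : HasDerivAt (fun t : ℝ => (x ^ 2 * (1 + x * t))⁻¹)
        (-(x ^ 2 * x) / (x ^ 2 * (1 + x * y)) ^ 2) y := h2.inv h2ne
    have hg : HasDerivAt (fun t : ℝ => -((x + 1) ^ 2 / x) * t - (x ^ 2 * (1 + x * t))⁻¹
        + C x) (-(x + 1) ^ 2 / x + 1 / (x * (1 + x * y) ^ 2)) y := by
      have := (h1.sub h3).add_const (C x)
      refine this.congr_deriv ?_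
      field_simp
      ring
    apply hg.congr_of_eventuallyEq
    have hopen : IsOpen {t : ℝ | t ≠ 0 ∧ 1 + x * t ≠ 0} := by
      have : {t : ℝ | t ≠ 0 ∧ 1 + x * t ≠ 0}
          = {t : ℝ | t ≠ 0} ∩ {t : ℝ | 1 + x * t ≠ 0} := rfl
      rw [this]
      exact (isOpen_ne).inter (isOpen_compl_iff.mpr
        (isClosed_eq (by continuity) continuous_const))
    filter_upwards [hopen.mem_nhds ⟨hy1, hy2⟩] with t ht
    obtain ⟨ht1, ht2⟩ := ht
    field_simp
  · field_simp
    ring
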